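/- Let A be symmetric positive definite of size n ≥ 2 with diagonal D = diag(A). Then the Jacobi-preconditioned matrix D^{-1/2} A D^{-1/2} has all diagonal entries equal to 1, and its condition number satisfies κ₂(D^{-1/2} A D^{-1/2}) ≤ n · min_{diagonal S ≻ 0} κ₂(S A S) — in particular κ₂(D^{-1/2} A D^{-1/2}) ≤ n · κ₂(A). -/

import Mathlib

open Matrix

/-- Spectral condition number of a real symmetric matrix:
ratio of largest to smallest eigenvalue (0 if not Hermitian). -/
noncomputable def kappa {n : ℕ} (A : Matrix (Fin n) (Fin n) ℝ) : ℝ :=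
  if h : A.IsHermitian then (⨆ i, h.eigenvalues i) / (⨅ i, h.eigenvalues i) else 0

namespace JacAux
variable {n : ℕ}

lemma dot_diag (d x w : Fin n → ℝ) :
    x ⬝ᵥ ((Matrix.diagonal d) *ᵥ w) = ((Matrix.diagonal d) *ᵥ x) ⬝ᵥ w := by
  simp only [dotProduct, mulVec_diagonal]
  exact Finset.sum_congr rfl fun i _ => by ring

lemma star_diag (d : Fin n → ℝ) : (Matrix.diagonal d)ᴴ = Matrix.diagonal d := by
  rw [conjTranspose_eq_transpose_of_trivial, diagonal_transpose]

lemma mulVec_diag_ne_zero {d x : Fin n → ℝ} (hd : ∀ i, d i ≠ 0) (hx : x ≠ 0) :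
    (Matrix.diagonal d) *ᵥ x ≠ 0 := by
  intro h
  apply hx
  funext i
  have := congrFun h i
  simp only [mulVec_diagonal, Pi.zero_apply] at this ⊢
  exact (mul_eq_zero.mp this).resolve_left (hd i)

lemma posDef_conj_diag {A : Matrix (Fin n) (Fin n) ℝ} (hA : A.PosDef)
    {d : Fin n → ℝ} (hd : ∀ i, d i ≠ 0) :
    (Matrix.diagonal d * A * Matrix.diagonal d).PosDef := by
  refine Matrix.PosDef.of_dotProduct_mulVec_pos ?_ ?_
  · have := isHermitian_conjTranspose_mul_mul (Matrix.diagonal d) hA.1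
    rwa [star_diag] at this
  · intro x hx
    have hz := hA.dotProduct_mulVec_pos (mulVec_diag_ne_zero hd hx)
    simp only [star_trivial] at hz ⊢
    rw [← mulVec_mulVec, ← mulVec_mulVec, dot_diag]
    exact hz

lemma quad_repr {B : Matrix (Fin n) (Fin n) ℝ} (hB : B.IsHermitian) (x : Fin n → ℝ) :
    ∃ y : Fin n → ℝ,
      x ⬝ᵥ (B *ᵥ x) = ∑ i, hB.eigenvalues i * (y i * y i) ∧
      x ⬝ᵥ x = ∑ i, y i * y i := by
  set U : Matrix (Fin n) (Fin n) ℝ := (hB.eigenvectorUnitary : Matrix (Fin n) (Fin n) ℝ) with hU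
  set y : Fin n → ℝ := star U *ᵥ x with hy
  have hstarU : star U = Uᵀ := by
    rw [Matrix.star_eq_conjTranspose, conjTranspose_eq_transpose_of_trivial]
  have key : ∀ w, x ⬝ᵥ (U *ᵥ w) = y ⬝ᵥ w := by
    intro w
    rw [dotProduct_mulVec, hy, hstarU, mulVec_transpose]
  refine ⟨y, ?_, ?_⟩
  · conv_lhs => rw [hB.spectral_theorem, Unitary.conjStarAlgAut_apply]
    rw [← mulVec_mulVec, ← mulVec_mulVec, key]
    simp only [dotProduct, mulVec_diagonal, Function.comp_apply, RCLike.ofReal_real_eq_id,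
      id_eq]
    exact Finset.sum_congr rfl fun i _ => by ring
  · have : x ⬝ᵥ x = x ⬝ᵥ ((U * star U) *ᵥ x) := by
      rw [(Matrix.mem_unitaryGroup_iff).mp hB.eigenvectorUnitary.2, one_mulVec]
    rw [this, ← mulVec_mulVec, key, ← hy]
    rfl

lemma inf_quad (hn : 0 < n) {B : Matrix (Fin n) (Fin n) ℝ} (hB : B.IsHermitian)
    (x : Fin n → ℝ) :
    (⨅ i, hB.eigenvalues i) * (x ⬝ᵥ x) ≤ x ⬝ᵥ (B *ᵥ x) := by
  have : Nonempty (Fin n) := Fin.pos_iff_nonempty.mp hn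
  obtain ⟨y, h1, h2⟩ := quad_repr hB x
  rw [h1, h2, Finset.mul_sum]
  refine Finset.sum_le_sum fun i _ => ?_
  exact mul_le_mul_of_nonneg_right (ciInf_le (Set.finite_range _).bddBelow i)
    (mul_self_nonneg _)

lemma quad_sup (hn : 0 < n) {B : Matrix (Fin n) (Fin n) ℝ} (hB : B.IsHermitian)
    (x : Fin n → ℝ) :
    x ⬝ᵥ (B *ᵥ x) ≤ (⨆ i, hB.eigenvalues i) * (x ⬝ᵥ x) := by
  have : Nonempty (Fin n) := Fin.pos_iff_nonempty.mp hn
  obtain ⟨y, h1, h2⟩ := quad_repr hB x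
  rw [h1, h2, Finset.mul_sum]
  refine Finset.sum_le_sum fun i _ => ?_
  exact mul_le_mul_of_nonneg_right (le_ciSup (Set.finite_range _).bddAbove i)
    (mul_self_nonneg _)

lemma trace_eq_sum_eig {B : Matrix (Fin n) (Fin n) ℝ} (hB : B.IsHermitian) :
    B.trace = ∑ i, hB.eigenvalues i := by
  conv_lhs => rw [hB.spectral_theorem, Unitary.conjStarAlgAut_apply]
  rw [trace_mul_comm, ← Matrix.mul_assoc,
    (Matrix.mem_unitaryGroup_iff').mp hB.eigenvectorUnitary.2, one_mul, trace_diagonal]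
  simp

lemma core (hn : 2 ≤ n) {J : Matrix (Fin n) (Fin n) ℝ} (hJpd : J.PosDef)
    (hdiag : ∀ i, J i i = 1) {t : Fin n → ℝ} (ht : ∀ i, 0 < t i) :
    kappa J ≤ n * kappa (Matrix.diagonal t * J * Matrix.diagonal t) := by
  have hn0 : 0 < n := lt_of_lt_of_le two_pos hn
  have hne : Nonempty (Fin n) := Fin.pos_iff_nonempty.mp hn0
  set B := Matrix.diagonal t * J * Matrix.diagonal t with hB
  have hBpd : B.PosDef := posDef_conj_diag hJpd (fun i => (ht i).ne')
  rw [kappa, kappa, dif_pos hJpd.1, dif_pos hBpd.1]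
  set supJ := ⨆ i, hJpd.1.eigenvalues i with hsupJ
  set infJ := ⨅ i, hJpd.1.eigenvalues i with hinfJ
  set supB := ⨆ i, hBpd.1.eigenvalues i with hsupB
  set infB := ⨅ i, hBpd.1.eigenvalues i with hinfB
  -- infJ positive, attained
  obtain ⟨i0, hi0⟩ := exists_eq_ciInf_of_finite (f := hJpd.1.eigenvalues)
  have hinfJpos : 0 < infJ := hinfJ ▸ hi0 ▸ hJpd.eigenvalues_pos i0
  obtain ⟨ib, hib⟩ := exists_eq_ciInf_of_finite (f := hBpd.1.eigenvalues)
  have hinfBpos : 0 < infB := hinfB ▸ hib ▸ hBpd.eigenvalues_pos ib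
  -- eigenvector for infJ
  set u : Fin n → ℝ := ⇑(hJpd.1.eigenvectorBasis i0) with hu
  have hJu : J *ᵥ u = infJ • u := by
    rw [hinfJ, ← hi0]; exact hJpd.1.mulVec_eigenvectorBasis i0
  have hu0 : u ≠ 0 := by
    intro h
    apply hJpd.1.eigenvectorBasis.orthonormal.ne_zero i0
    ext i
    exact congrFun h i
  -- max of t
  obtain ⟨k, -, hk⟩ := Finset.exists_max_image Finset.univ t ⟨Classical.arbitrary _,
    Finset.mem_univ _⟩
  have hk' : ∀ i, t i ≤ t k := fun i => hk i (Finset.mem_univ i)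
  -- supB ≥ t k * t k
  have hBkk : t k * t k ≤ supB := by
    have h := quad_sup hn0 hBpd.1 (Pi.single k 1)
    have e1 : (Pi.single k 1 : Fin n → ℝ) ⬝ᵥ (B *ᵥ Pi.single k 1) = t k * t k := by
      simp [mulVec_single, single_dotProduct, hB, Matrix.mul_diagonal, Matrix.diagonal_mul,
        hdiag k]
    have e2 : (Pi.single k 1 : Fin n → ℝ) ⬝ᵥ Pi.single k 1 = 1 := by
      simp [single_dotProduct]
    rw [e1, e2, mul_one] at h
    exact h
  -- infB ≤ infJ * (t k * t k)
  set x : Fin n → ℝ := fun i => (t i)⁻¹ * u i with hx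
  have hux : ∀ i, u i = t i * x i := by
    intro i
    show u i = t i * ((t i)⁻¹ * u i)
    rw [← mul_assoc, mul_inv_cancel₀ (ht i).ne', one_mul]
  have hx0 : x ≠ 0 := by
    intro h
    apply hu0
    funext i
    rw [hux i, congrFun h i]
    simp
  have hTx : Matrix.diagonal t *ᵥ x = u := by
    funext i
    rw [mulVec_diagonal, ← hux i]
  have hquadB : x ⬝ᵥ (B *ᵥ x) = infJ * (u ⬝ᵥ u) := by
    rw [hB, ← mulVec_mulVec, ← mulVec_mulVec, dot_diag, hTx, hJu, dotProduct_smul,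
      smul_eq_mul]
  have huu : u ⬝ᵥ u ≤ (t k * t k) * (x ⬝ᵥ x) := by
    simp only [dotProduct, Finset.mul_sum]
    refine Finset.sum_le_sum fun i _ => ?_
    rw [hux i]
    have h1 := hk' i
    have h2 := (ht i).le
    nlinarith [mul_self_nonneg (x i), mul_le_mul h1 h1 h2 (ht k).le]
  have hxx : 0 < x ⬝ᵥ x := by
    obtain ⟨j, hj⟩ := Function.ne_iff.mp hx0
    exact Finset.sum_pos' (fun i _ => mul_self_nonneg _)
      ⟨j, Finset.mem_univ j, mul_self_pos.mpr hj⟩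
  have hinfB_le : infB ≤ infJ * (t k * t k) := by
    have h := inf_quad hn0 hBpd.1 x
    rw [hquadB] at h
    have h2 : infB * (x ⬝ᵥ x) ≤ (infJ * (t k * t k)) * (x ⬝ᵥ x) := by
      calc infB * (x ⬝ᵥ x) ≤ infJ * (u ⬝ᵥ u) := h
        _ ≤ infJ * ((t k * t k) * (x ⬝ᵥ x)) :=
            mul_le_mul_of_nonneg_left huu hinfJpos.le
        _ = (infJ * (t k * t k)) * (x ⬝ᵥ x) := by ring
    exact le_of_mul_le_mul_right h2 hxx
  -- supJ ≤ n
  have hsupJ_le : supJ ≤ (n : ℝ) := by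
    obtain ⟨j0, hj0⟩ := exists_eq_ciSup_of_finite (f := hJpd.1.eigenvalues)
    rw [hsupJ, ← hj0]
    have h1 : hJpd.1.eigenvalues j0 ≤ ∑ i, hJpd.1.eigenvalues i :=
      Finset.single_le_sum (fun i _ => (hJpd.eigenvalues_pos i).le) (Finset.mem_univ j0)
    have h2 : ∑ i, hJpd.1.eigenvalues i = (n : ℝ) := by
      rw [← trace_eq_sum_eig hJpd.1, Matrix.trace]
      simp [Matrix.diag, hdiag]
    rw [h2] at h1
    exact h1
  have htk : 0 < t k := ht k
  have htk2 : 0 < t k * t k := mul_pos htk htk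
  calc supJ / infJ ≤ (n : ℝ) / infJ := by gcongr
    _ = (n : ℝ) * (t k * t k) / (infJ * (t k * t k)) := by
        rw [mul_div_mul_right _ _ htk2.ne']
    _ ≤ (n : ℝ) * supB / infB := by
        refine div_le_div₀ (mul_nonneg (Nat.cast_nonneg n) (htk2.le.trans hBkk)) ?_ hinfBpos hinfB_le
        exact mul_le_mul_of_nonneg_left hBkk (Nat.cast_nonneg n)
    _ = (n : ℝ) * (supB / infB) := by ring

end JacAux

theorem jacobi_scaling_near_optimal {n : ℕ} (hn : 2 ≤ n)
    (A : Matrix (Fin n) (Fin n) ℝ) (hA : A.PosDef)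
    (J : Matrix (Fin n) (Fin n) ℝ)
    (hJ : J = Matrix.diagonal (fun i => (Real.sqrt (A i i))⁻¹) * A *
      Matrix.diagonal (fun i => (Real.sqrt (A i i))⁻¹)) :
    (∀ i, J i i = 1) ∧
      (∀ s : Fin n → ℝ, (∀ i, 0 < s i) →
        kappa J ≤ n * kappa (Matrix.diagonal s * A * Matrix.diagonal s)) ∧
      kappa J ≤ n * kappa A := by
  have hApos : ∀ i, 0 < A i i := by
    intro i
    have hx : (Pi.single i 1 : Fin n → ℝ) ≠ 0 := by
      intro h
      simpa using congrFun h i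
    have h := hA.dotProduct_mulVec_pos hx
    simpa [star_trivial, Matrix.mulVec_single, single_dotProduct] using h
  have hsqrt : ∀ i, Real.sqrt (A i i) ≠ 0 :=
    fun i => Real.sqrt_ne_zero'.mpr (hApos i)
  have hdiag : ∀ i, J i i = 1 := by
    intro i
    rw [hJ, Matrix.mul_diagonal, Matrix.diagonal_mul,
      show (Real.sqrt (A i i))⁻¹ * A i i * (Real.sqrt (A i i))⁻¹ =
        A i i / (Real.sqrt (A i i) * Real.sqrt (A i i)) from by ring,
      Real.mul_self_sqrt (hApos i).le, div_self (hApos i).ne']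
  have hJpd : J.PosDef := by
    rw [hJ]
    exact JacAux.posDef_conj_diag hA (fun i => inv_ne_zero (hsqrt i))
  have part2 : ∀ s : Fin n → ℝ, (∀ i, 0 < s i) →
      kappa J ≤ n * kappa (Matrix.diagonal s * A * Matrix.diagonal s) := by
    intro s hs
    set t : Fin n → ℝ := fun i => s i * Real.sqrt (A i i) with hT
    have ht : ∀ i, 0 < t i :=
      fun i => mul_pos (hs i) (Real.sqrt_pos.mpr (hApos i))
    have heq : Matrix.diagonal s * A * Matrix.diagonal s =
        Matrix.diagonal t * J * Matrix.diagonal t := by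
      rw [hJ]
      have e1 : Matrix.diagonal t *
          (Matrix.diagonal (fun i => (Real.sqrt (A i i))⁻¹) * A *
            Matrix.diagonal (fun i => (Real.sqrt (A i i))⁻¹)) * Matrix.diagonal t =
          (Matrix.diagonal t * Matrix.diagonal (fun i => (Real.sqrt (A i i))⁻¹)) * A *
            (Matrix.diagonal (fun i => (Real.sqrt (A i i))⁻¹) * Matrix.diagonal t) := by
        simp only [Matrix.mul_assoc]
      have e2 : (fun i => t i * (Real.sqrt (A i i))⁻¹) = s := funext fun i => by
        show s i * Real.sqrt (A i i) * (Real.sqrt (A i i))⁻¹ = s i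
        rw [mul_assoc, mul_inv_cancel₀ (hsqrt i), mul_one]
      have e3 : (fun i => (Real.sqrt (A i i))⁻¹ * t i) = s := funext fun i => by
        show (Real.sqrt (A i i))⁻¹ * (s i * Real.sqrt (A i i)) = s i
        rw [mul_comm (s i), ← mul_assoc, inv_mul_cancel₀ (hsqrt i), one_mul]
      rw [e1, Matrix.diagonal_mul_diagonal, Matrix.diagonal_mul_diagonal, e2, e3]
    rw [heq]
    exact JacAux.core hn hJpd hdiag ht
  refine ⟨hdiag, part2, ?_⟩
  have h := part2 (fun _ => 1) (fun _ => one_pos)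
  simpa using h
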